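/- Let n ≥ 3 be odd, k ≥ 1, and 1 ≤ c ≤ k. The unicyclic graph G_{n,k,-c}, consisting of an odd cycle on vertices a_1,...,a_n with k pendant vertices attached to each of a_1,...,a_{n-1} and k−c pendant vertices attached to a_n, is super edge-magic total and sm(G_{n,k,-c}) = 2n(k+1) − 2c + (n+3)/2. -/

import Mathlib

/-- A super edge-magic total labeling of a graph `G` with `p = Fintype.card V` vertices and
`q = G.edgeSet.ncard` edges: `fv` maps the vertices bijectively onto `{1,…,p}`, `fe` maps the
edges bijectively onto `{p+1,…,p+q}` (so together they form a bijection of `V ∪ E` onto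
`{1,…,p+q}` with `f(V) = {1,…,p}`), and every edge `uv` satisfies `f(u)+f(v)+f(uv) = c`. -/
def IsSEMT {V : Type*} [Fintype V] (G : SimpleGraph V)
    (fv : V → ℕ) (fe : Sym2 V → ℕ) (c : ℕ) : Prop :=
  Set.BijOn fv Set.univ (Set.Icc 1 (Fintype.card V)) ∧
  Set.BijOn fe G.edgeSet
    (Set.Icc (Fintype.card V + 1) (Fintype.card V + G.edgeSet.ncard)) ∧
  ∀ u v, G.Adj u v → fv u + fv v + fe s(u, v) = c

/-- The unicyclic graph `G(n; k₁, …, kₙ)`: a cycle on `Fin n` (vertex `i` adjacent to `i+1 mod n`)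
with `k i` pendant vertices attached to the cycle vertex `i`. -/
def pendantCycle (n : ℕ) (k : Fin n → ℕ) :
    SimpleGraph (Fin n ⊕ Σ i : Fin n, Fin (k i)) :=
  SimpleGraph.fromRel (fun a b =>
    (∃ i j : Fin n, a = Sum.inl i ∧ b = Sum.inl j ∧ (i.val + 1) % n = j.val) ∨
    (∃ (i : Fin n) (j : Fin (k i)), a = Sum.inr ⟨i, j⟩ ∧ b = Sum.inl i))


namespace SM10

/-! ### arithmetic helpers -/

def gl (n i : ℕ) : ℕ := if i % 2 = 0 then i / 2 + 1 else (n + i) / 2 + 1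
def ol (n s : ℕ) : ℕ := if s < (n+1)/2 then s + (n+1)/2 - 2 else s - (n+1)/2 - 1

variable {n i j s s' : ℕ}

lemma gl_mem (ho : Odd n) (hi : i < n) : 1 ≤ gl n i ∧ gl n i ≤ n := by
  obtain ⟨t, rfl⟩ := ho; unfold gl; split_ifs <;> omega

lemma gl_inj (ho : Odd n) (hi : i < n) (hj : j < n) (h : gl n i = gl n j) : i = j := by
  obtain ⟨t, rfl⟩ := ho; unfold gl at h; split_ifs at h <;> omega

lemma gl_last (ho : Odd n) : gl n (n - 1) = (n+1)/2 := by
  obtain ⟨t, rfl⟩ := ho; unfold gl; split_ifs <;> omega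

lemma cyc_sum (ho : Odd n) (hn : 3 ≤ n) (hi : i < n) :
    gl n i + gl n ((i+1) % n) = if i = n - 1 then (n+1)/2 + 1 else (n+1)/2 + i + 2 := by
  have hm : (i + 1) % n = if i = n - 1 then 0 else i + 1 := by
    split_ifs with hh
    · subst hh; rw [Nat.sub_add_cancel (by omega), Nat.mod_self]
    · exact Nat.mod_eq_of_lt (by omega)
  rw [hm]; obtain ⟨t, rfl⟩ := ho
  unfold gl; split_ifs <;> omega

lemma ol_add (ho : Odd n) (hn : 3 ≤ n) (hs : 1 ≤ s) (hs' : s ≤ n) (hne : s ≠ (n+1)/2) :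
    ol n s ≤ n - 2 ∧ (n+1)/2 ≤ s + ol n s ∧ s + ol n s ≤ (n+1)/2 + n - 2 := by
  obtain ⟨t, rfl⟩ := ho; unfold ol; split_ifs <;> omega

lemma ol_inj (ho : Odd n) (hn : 3 ≤ n) (hs : 1 ≤ s) (hs2 : s ≤ n) (hne : s ≠ (n+1)/2)
    (hs1' : 1 ≤ s') (hs2' : s' ≤ n) (hne' : s' ≠ (n+1)/2) (h : ol n s = ol n s') : s = s' := by
  obtain ⟨t, rfl⟩ := ho; unfold ol at h; split_ifs at h <;> omega

lemma ol_add_inj (ho : Odd n) (hn : 3 ≤ n) (hs : 1 ≤ s) (hs2 : s ≤ n) (hne : s ≠ (n+1)/2)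
    (hs1' : 1 ≤ s') (hs2' : s' ≤ n) (hne' : s' ≠ (n+1)/2)
    (h : s + ol n s = s' + ol n s') : s = s' := by
  obtain ⟨t, rfl⟩ := ho; unfold ol at h; split_ifs at h <;> omega

theorem tile_inj {u u' j j' w : ℕ} (h1 : 1 ≤ u) (h2 : u ≤ w) (h3 : 1 ≤ u') (h4 : u' ≤ w)
    (h : u + j*w = u' + j'*w) : u = u' ∧ j = j' := by
  have hw : 0 < w := by omega
  have hj : (u - 1 + j*w)/w = j := by
    rw [Nat.add_mul_div_right _ _ hw, Nat.div_eq_of_lt (by omega)]; omega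
  have hj' : (u' - 1 + j'*w)/w = j' := by
    rw [Nat.add_mul_div_right _ _ hw, Nat.div_eq_of_lt (by omega)]; omega
  have heq : u - 1 + j*w = u' - 1 + j'*w := by omega
  have : j = j' := by rw [← hj, ← hj', heq]
  subst this; omega

theorem tile_inj' {a u u' j j' w : ℕ} (h1 : a+1 ≤ u) (h2 : u ≤ a+w) (h3 : a+1 ≤ u') (h4 : u' ≤ a+w)
    (h : u + j*w = u' + j'*w) : u = u' ∧ j = j' := by
  have := tile_inj (u := u - a) (u' := u' - a) (j := j) (j' := j') (w := w)
    (by omega) (by omega) (by omega) (by omega) (by omega)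
  omega

theorem tile_le0 {u j J w : ℕ} (hj : j < J) (h1 : 1 ≤ u) (h2 : u ≤ w) :
    1 ≤ u + j*w ∧ u + j*w ≤ J*w := by
  have : j*w + w ≤ J*w := by
    calc j*w + w = (j+1)*w := by ring
    _ ≤ J*w := Nat.mul_le_mul_right w hj
  omega

theorem tile_le {a u j J w : ℕ} (hj : j < J) (h1 : a+1 ≤ u) (h2 : u ≤ a+w) :
    a+1 ≤ u + j*w ∧ u + j*w ≤ a + J*w := by
  have : j*w + w ≤ J*w := by
    calc j*w + w = (j+1)*w := by ring
    _ ≤ J*w := Nat.mul_le_mul_right w hj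
  omega

/-! ### generic counting bijection -/

lemma ncard_Icc (a b : ℕ) : (Set.Icc a b).ncard = b + 1 - a := by
  rw [← Finset.coe_Icc, Set.ncard_coe_finset, Nat.card_Icc]

lemma bijOn_count {α β : Type*} {f : α → β} {s : Set α} {t : Set β}
    (hm : Set.MapsTo f s t) (hi : Set.InjOn f s) (ht : t.Finite)
    (hc : s.ncard = t.ncard) : Set.BijOn f s t := by
  refine ⟨hm, hi, ?_⟩
  have h1 : (f '' s).ncard = t.ncard := by rw [Set.ncard_image_of_injOn hi, hc]
  have h2 : f '' s = t := Set.eq_of_subset_of_ncard_le (Set.mapsTo_iff_image_subset.1 hm) (by omega) ht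
  exact h2.superset



variable {n : ℕ} {K : Fin n → ℕ}

abbrev V (n : ℕ) (K : Fin n → ℕ) := Fin n ⊕ Σ i : Fin n, Fin (K i)

def nxt (hn : 0 < n) (i : Fin n) : Fin n := ⟨(i.val+1) % n, Nat.mod_lt _ hn⟩

def ee (K : Fin n → ℕ) (hn : 0 < n) : V n K → Sym2 (V n K)
| .inl i => s(.inl i, .inl (nxt hn i))
| .inr x => s(.inr x, .inl x.1)

lemma nxt_ne (hn : 3 ≤ n) (hn0 : 0 < n) (i : Fin n) : nxt hn0 i ≠ i := by
  have hi := i.isLt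
  simp only [nxt, Fin.ne_iff_vne]
  rcases eq_or_ne i.val (n-1) with h | h
  · rw [show i.val + 1 = n by omega, Nat.mod_self]; omega
  · rw [Nat.mod_eq_of_lt (by omega)]; omega

lemma edgeSet_eq (hn : 3 ≤ n) (hn0 : 0 < n) :
    (pendantCycle n K).edgeSet = Set.range (ee K hn0) := by
  ext e
  induction e using Sym2.ind with
  | _ u v =>
    rw [SimpleGraph.mem_edgeSet]
    constructor
    · rintro ⟨hne, h | h⟩ <;>
        rcases h with ⟨i, j, rfl, rfl, hij⟩ | ⟨i, j, rfl, rfl⟩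
      · exact ⟨.inl i, by simp [ee, nxt, hij]⟩
      · exact ⟨.inr ⟨i, j⟩, rfl⟩
      · refine ⟨.inl i, ?_⟩
        simp only [ee]
        rw [show nxt hn0 i = j from Fin.ext hij]
        exact Sym2.eq_swap
      · exact ⟨.inr ⟨i, j⟩, by simp [ee, Sym2.eq_swap]⟩
    · rintro ⟨x, hx⟩
      have hadj : ∀ a b : V n K, (ee K hn0) x = s(a, b) → (pendantCycle n K).Adj a b := by
        intro a b hab
        cases x with
        | inl i =>
          have : (pendantCycle n K).Adj (.inl i) (.inl (nxt hn0 i)) := by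
            refine ⟨by simpa [Ne, eq_comm] using nxt_ne hn hn0 i, Or.inl (Or.inl ?_)⟩
            exact ⟨i, nxt hn0 i, rfl, rfl, rfl⟩
          rw [ee] at hab
          rcases Sym2.eq_iff.1 hab with ⟨rfl, rfl⟩ | ⟨rfl, rfl⟩
          · exact this
          · exact this.symm
        | inr y =>
          have : (pendantCycle n K).Adj (.inr y) (.inl y.1) := by
            refine ⟨by simp, Or.inl (Or.inr ?_)⟩
            exact ⟨y.1, y.2, by simp, rfl⟩
          rw [ee] at hab
          rcases Sym2.eq_iff.1 hab with ⟨rfl, rfl⟩ | ⟨rfl, rfl⟩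
          · exact this
          · exact this.symm
      exact hadj u v hx

lemma ee_inj (hn : 3 ≤ n) (hn0 : 0 < n) : Function.Injective (ee K hn0) := by
  intro x y hxy
  cases x with
  | inl i =>
    cases y with
    | inl i' =>
      simp only [ee] at hxy
      rcases Sym2.eq_iff.1 hxy with ⟨h1, _⟩ | ⟨h1, h2⟩
      · rw [h1]
      · have e1 : i = nxt hn0 i' := Sum.inl.inj h1
        have e2 : nxt hn0 i = i' := Sum.inl.inj h2
        have hi := i.isLt; have hi' := i'.isLt
        have v1 : i.val = (i'.val + 1) % n := congrArg Fin.val e1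
        have v2 : (i.val + 1) % n = i'.val := congrArg Fin.val e2
        have m1 : (i'.val + 1) % n = if i'.val = n - 1 then 0 else i'.val + 1 := by
          split_ifs with h
          · rw [show i'.val + 1 = n by omega, Nat.mod_self]
          · exact Nat.mod_eq_of_lt (by omega)
        have m2 : (i.val + 1) % n = if i.val = n - 1 then 0 else i.val + 1 := by
          split_ifs with h
          · rw [show i.val + 1 = n by omega, Nat.mod_self]
          · exact Nat.mod_eq_of_lt (by omega)
        rw [m1] at v1; rw [m2] at v2
        exact absurd rfl (by split_ifs at v1 v2 <;> omega : i.val ≠ i.val)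
    | inr y => simp only [ee] at hxy; rcases Sym2.eq_iff.1 hxy with ⟨h, _⟩ | ⟨_, h⟩ <;> simp at h
  | inr x =>
    cases y with
    | inl i => simp only [ee] at hxy; rcases Sym2.eq_iff.1 hxy with ⟨h, _⟩ | ⟨h, _⟩ <;> simp at h
    | inr y =>
      simp only [ee] at hxy
      rcases Sym2.eq_iff.1 hxy with ⟨h, _⟩ | ⟨h, _⟩
      · rw [h]
      · simp at h


/-! ### the specific graph -/

abbrev Kf (n k c : ℕ) : Fin n → ℕ := fun i => if i.val = n - 1 then k - c else k

def vl (n k c : ℕ) : V n (Kf n k c) → ℕ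
  | .inl i => gl n i.val
  | .inr ⟨i, j⟩ =>
      if j.val < k - c then n + (gl n ((i.val+1) % n) + j.val*n)
      else n + (k-c)*n + ((ol n (gl n i.val) + 1) + (j.val-(k-c))*(n-1))

lemma cardV (n k c : ℕ) (hn : 3 ≤ n) (hck : c ≤ k) :
    Fintype.card (V n (Kf n k c)) = n + (k-c)*n + c*(n-1) := by
  obtain ⟨d, rfl⟩ : ∃ d, k = c + d := ⟨k - c, by omega⟩
  obtain ⟨w, rfl⟩ : ∃ w, n = w + 1 := ⟨n - 1, by omega⟩
  have hkc : c + d - c = d := by omega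
  simp only [Fintype.card_sum, Fintype.card_sigma, Fintype.card_fin, Kf, hkc]
  rw [Fin.sum_univ_eq_sum_range (fun i => if i = w + 1 - 1 then d else c + d)]
  have : w + 1 - 1 = w := rfl
  rw [this, Finset.sum_range_succ, if_pos rfl]
  have : ∀ x ∈ Finset.range w, (if x = w then d else c + d) = c + d := by
    intro x hx; rw [if_neg]; exact Nat.ne_of_lt (Finset.mem_range.1 hx)
  rw [Finset.sum_congr rfl this, Finset.sum_const, Finset.card_range, smul_eq_mul]
  ring

lemma ncard_edge (n : ℕ) (K : Fin n → ℕ) (hn : 3 ≤ n) (hn0 : 0 < n) :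
    (Set.range (ee K hn0)).ncard = Fintype.card (V n K) := by
  rw [← Set.image_univ, Set.ncard_image_of_injective _ (ee_inj hn hn0), Set.ncard_univ,
    Nat.card_eq_fintype_card]

lemma mod_succ_inj {n i j : ℕ} (hn : 3 ≤ n) (hi : i < n) (hj : j < n)
    (h : (i+1) % n = (j+1) % n) : i = j := by
  have m1 : (i + 1) % n = if i = n - 1 then 0 else i + 1 := by
    split_ifs with hh
    · subst hh; rw [Nat.sub_add_cancel (by omega), Nat.mod_self]
    · exact Nat.mod_eq_of_lt (by omega)
  have m2 : (j + 1) % n = if j = n - 1 then 0 else j + 1 := by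
    split_ifs with hh
    · subst hh; rw [Nat.sub_add_cancel (by omega), Nat.mod_self]
    · exact Nat.mod_eq_of_lt (by omega)
  rw [m1, m2] at h; split_ifs at h <;> omega

section Construction

variable {n k c : ℕ}

/-- the edge-sum function -/
def esum (n k c : ℕ) : Sym2 (V n (Kf n k c)) → ℕ :=
  Sym2.lift ⟨fun u v => vl n k c u + vl n k c v, fun _ _ => by ring⟩

lemma construction (hn : 3 ≤ n) (ho : Odd n) (hc : 1 ≤ c) (hck : c ≤ k) :
    IsSEMT (pendantCycle n (Kf n k c)) (vl n k c)
      (fun e => (2*(n + (k-c)*n + c*(n-1)) + (n+1)/2 + 1) - esum n k c e)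
      (2*(n + (k-c)*n + c*(n-1)) + (n+1)/2 + 1) := by
  have hn0 : 0 < n := by omega
  set M := n + (k-c)*n + c*(n-1) with hM
  set h := (n+1)/2 with hh
  set C := 2*M + h + 1 with hC
  have hh2 : 2*h = n + 1 := by obtain ⟨t, rfl⟩ := ho; omega
  have hE : (pendantCycle n (Kf n k c)).edgeSet = Set.range (ee (Kf n k c) hn0) :=
    edgeSet_eq hn hn0
  have hcard : Fintype.card (V n (Kf n k c)) = M := cardV n k c hn hck
  have hnc : (pendantCycle n (Kf n k c)).edgeSet.ncard = M := by
    rw [hE, ncard_edge n _ hn hn0, hcard]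
  have hgl : ∀ i : Fin n, 1 ≤ gl n i.val ∧ gl n i.val ≤ n := fun i => gl_mem ho i.isLt
  have hglm : ∀ i : Fin n, 1 ≤ gl n ((i.val+1) % n) ∧ gl n ((i.val+1) % n) ≤ n :=
    fun i => gl_mem ho (Nat.mod_lt _ hn0)
  -- facts about pendants in the "top" range
  have htop : ∀ (i : Fin n) (j : Fin (Kf n k c i)), ¬(j.val < k - c) →
      i.val ≠ n - 1 ∧ gl n i.val ≠ h ∧ j.val < k ∧ j.val - (k-c) < c := by
    intro i j hj
    have hKi : j.val < (if i.val = n - 1 then k - c else k) := j.isLt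
    have hine : i.val ≠ n - 1 := by
      intro hie; rw [if_pos hie] at hKi; omega
    rw [if_neg hine] at hKi
    refine ⟨hine, ?_, hKi, by omega⟩
    intro heq
    exact hine (gl_inj ho i.isLt (by omega) (heq.trans (gl_last ho).symm))
  have hcyc : ∀ i : Fin n, gl n i.val + gl n ((i.val+1) % n) =
      if i.val = n - 1 then h + 1 else h + i.val + 2 := fun i => cyc_sum ho hn i.isLt
  -- the vertex labeling is a bijection onto [1, M]
  have hvlinj : Function.Injective (vl n k c) := by
    have hinr_lb : ∀ (i : Fin n) (j : Fin (Kf n k c i)), n + 1 ≤ vl n k c (.inr ⟨i,j⟩) := by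
      intro i j
      simp only [vl]; split_ifs with hj
      · have := (hglm i).1; omega
      · omega
    intro x y hxy
    cases x with
    | inl i =>
      cases y with
      | inl i' =>
        exact congrArg _ (Fin.ext (gl_inj ho i.isLt i'.isLt hxy))
      | inr z =>
        obtain ⟨i', j'⟩ := z
        have h1 := (hgl i).2
        have h2 := hinr_lb i' j'
        rw [show vl n k c (.inl i) = gl n i.val from rfl] at hxy
        omega
    | inr z =>
      obtain ⟨i, j⟩ := z
      cases y with
      | inl i' =>
        have h1 := (hgl i').2
        have h2 := hinr_lb i j
        rw [show vl n k c (.inl i') = gl n i'.val from rfl] at hxy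
        omega
      | inr z' =>
        obtain ⟨i', j'⟩ := z'
        simp only [vl] at hxy
        split_ifs at hxy with h1 h2 h2
        · -- bottom / bottom
          obtain ⟨hu, hj⟩ := tile_inj (hglm i).1 (hglm i).2 (hglm i').1 (hglm i').2
            (by omega : gl n ((i.val+1)%n) + j.val*n = gl n ((i'.val+1)%n) + j'.val*n)
          have hii : i = i' := Fin.ext (mod_succ_inj hn i.isLt i'.isLt
            (gl_inj ho (Nat.mod_lt _ hn0) (Nat.mod_lt _ hn0) hu))
          subst hii
          exact congrArg _ (congrArg _ (Fin.ext hj))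
        · -- bottom / top : disjoint ranges
          have b1 := tile_le0 (w := n) (J := k - c) h1 (hglm i).1 (hglm i).2
          obtain ⟨_, _, _, hb'⟩ := htop i' j' h2
          have o2 := ol_add ho hn (hgl i').1 (hgl i').2 (by simpa [hh] using (htop i' j' h2).2.1)
          have b2 := tile_le0 (w := n-1) (J := c) hb' (by omega : 1 ≤ ol n (gl n i'.val) + 1)
            (by omega : ol n (gl n i'.val) + 1 ≤ n - 1)
          omega
        · -- top / bottom
          have b1 := tile_le0 (w := n) (J := k - c) h2 (hglm i').1 (hglm i').2
          obtain ⟨_, _, _, hb'⟩ := htop i j h1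
          have o2 := ol_add ho hn (hgl i).1 (hgl i).2 (by simpa [hh] using (htop i j h1).2.1)
          have b2 := tile_le0 (w := n-1) (J := c) hb' (by omega : 1 ≤ ol n (gl n i.val) + 1)
            (by omega : ol n (gl n i.val) + 1 ≤ n - 1)
          omega
        · -- top / top
          obtain ⟨hi1, hgne, hjk, hb⟩ := htop i j h1
          obtain ⟨hi1', hgne', hjk', hb'⟩ := htop i' j' h2
          have o1 := ol_add ho hn (hgl i).1 (hgl i).2 (by simpa [hh] using hgne)
          have o1' := ol_add ho hn (hgl i').1 (hgl i').2 (by simpa [hh] using hgne')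
          obtain ⟨hu, hj⟩ := tile_inj (w := n-1)
            (by omega : 1 ≤ ol n (gl n i.val) + 1) (by omega)
            (by omega : 1 ≤ ol n (gl n i'.val) + 1) (by omega)
            (by omega : (ol n (gl n i.val) + 1) + (j.val - (k-c))*(n-1)
              = (ol n (gl n i'.val) + 1) + (j'.val - (k-c))*(n-1))
          have hgg : gl n i.val = gl n i'.val := ol_inj ho hn (hgl i).1 (hgl i).2
            (by simpa [hh] using hgne) (hgl i').1 (hgl i').2 (by simpa [hh] using hgne')
            (by omega)
          have hii : i = i' := Fin.ext (gl_inj ho i.isLt i'.isLt hgg)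
          subst hii
          exact congrArg _ (congrArg _ (Fin.ext (by omega)))
  have hvlbij : Set.BijOn (vl n k c) Set.univ (Set.Icc 1 M) := by
    refine bijOn_count ?_ (fun x _ y _ hxy => hvlinj hxy) (Set.finite_Icc _ _) ?_
    · rintro x -
      rw [Set.mem_Icc]
      cases x with
      | inl i => have := hgl i; rw [show vl n k c (.inl i) = gl n i.val from rfl]; omega
      | inr z =>
        obtain ⟨i, j⟩ := z
        simp only [vl]; split_ifs with hj
        · have b1 := tile_le0 (w := n) (J := k - c) hj (hglm i).1 (hglm i).2
          omega
        · obtain ⟨_, hgne, _, hb⟩ := htop i j hj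
          have o1 := ol_add ho hn (hgl i).1 (hgl i).2 (by simpa [hh] using hgne)
          have b1 := tile_le0 (w := n-1) (J := c) hb
            (by omega : 1 ≤ ol n (gl n i.val) + 1) (by omega)
          omega
    · rw [Set.ncard_univ, Nat.card_eq_fintype_card, hcard, ncard_Icc]; omega
  -- the edge sums form a bijection onto [h+1, h+M]
  have hesum_inl : ∀ i : Fin n, esum n k c (ee (Kf n k c) hn0 (.inl i)) =
      gl n i.val + gl n ((i.val+1) % n) := fun i => rfl
  have hesum_inr : ∀ (i : Fin n) (j : Fin (Kf n k c i)),
      esum n k c (ee (Kf n k c) hn0 (.inr ⟨i,j⟩)) = vl n k c (.inr ⟨i,j⟩) + gl n i.val :=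
    fun i j => rfl
  have hψinj : ∀ x y, esum n k c (ee (Kf n k c) hn0 x) = esum n k c (ee (Kf n k c) hn0 y) →
      x = y := by
    intro x y hxy
    cases x with
    | inl i =>
      cases y with
      | inl i' =>
        rw [hesum_inl, hesum_inl, hcyc, hcyc] at hxy
        have := i.isLt; have := i'.isLt
        refine congrArg _ (Fin.ext ?_)
        split_ifs at hxy <;> omega
      | inr z =>
        obtain ⟨i', j'⟩ := z
        rw [hesum_inl, hesum_inr] at hxy
        simp only [vl] at hxy
        have hc1 := hcyc i
        have hc2 := hcyc i'
        have hi := i.isLt; have hi' := i'.isLt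
        split_ifs at hxy with hj
        · have b1 := tile_le (a := h) (w := n) (J := k - c) hj
            (by split_ifs at hc2 <;> omega : h+1 ≤ gl n i'.val + gl n ((i'.val+1)%n))
            (by split_ifs at hc2 <;> omega)
          split_ifs at hc1 <;> omega
        · obtain ⟨_, hgne, _, hb⟩ := htop i' j' hj
          have o1 := ol_add ho hn (hgl i').1 (hgl i').2 (by simpa [hh] using hgne)
          have b1 := tile_le (a := h) (w := n-1) (J := c) hb
            (by omega : h+1 ≤ gl n i'.val + ol n (gl n i'.val) + 1) (by omega)
          split_ifs at hc1 <;> omega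
    | inr z =>
      obtain ⟨i, j⟩ := z
      cases y with
      | inl i' =>
        rw [hesum_inl, hesum_inr] at hxy
        simp only [vl] at hxy
        have hc1 := hcyc i
        have hc2 := hcyc i'
        have hi := i.isLt; have hi' := i'.isLt
        split_ifs at hxy with hj
        · have b1 := tile_le (a := h) (w := n) (J := k - c) hj
            (by split_ifs at hc1 <;> omega : h+1 ≤ gl n i.val + gl n ((i.val+1)%n))
            (by split_ifs at hc1 <;> omega)
          split_ifs at hc2 <;> omega
        · obtain ⟨_, hgne, _, hb⟩ := htop i j hj
          have o1 := ol_add ho hn (hgl i).1 (hgl i).2 (by simpa [hh] using hgne)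
          have b1 := tile_le (a := h) (w := n-1) (J := c) hb
            (by omega : h+1 ≤ gl n i.val + ol n (gl n i.val) + 1) (by omega)
          split_ifs at hc2 <;> omega
      | inr z' =>
        obtain ⟨i', j'⟩ := z'
        rw [hesum_inr, hesum_inr] at hxy
        simp only [vl] at hxy
        split_ifs at hxy with h1 h2 h2
        · -- bottom/bottom
          have hc1 := hcyc i; have hc2 := hcyc i'
          have hi := i.isLt; have hi' := i'.isLt
          obtain ⟨hu, hj⟩ := tile_inj' (a := h) (w := n)
            (by split_ifs at hc1 <;> omega : h+1 ≤ gl n i.val + gl n ((i.val+1)%n))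
            (by split_ifs at hc1 <;> omega)
            (by split_ifs at hc2 <;> omega : h+1 ≤ gl n i'.val + gl n ((i'.val+1)%n))
            (by split_ifs at hc2 <;> omega)
            (by omega : gl n i.val + gl n ((i.val+1)%n) + j.val*n
              = gl n i'.val + gl n ((i'.val+1)%n) + j'.val*n)
          have hii : i = i' := Fin.ext (by split_ifs at hc1 hc2 <;> omega)
          subst hii
          exact congrArg _ (congrArg _ (Fin.ext (by omega)))
        · -- bottom/top
          have hc1 := hcyc i
          have hi := i.isLt
          have b1 := tile_le (a := h) (w := n) (J := k - c) h1
            (by split_ifs at hc1 <;> omega : h+1 ≤ gl n i.val + gl n ((i.val+1)%n))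
            (by split_ifs at hc1 <;> omega)
          obtain ⟨_, hgne, _, hb⟩ := htop i' j' h2
          have o1 := ol_add ho hn (hgl i').1 (hgl i').2 (by simpa [hh] using hgne)
          have b2 := tile_le (a := h) (w := n-1) (J := c) hb
            (by omega : h+1 ≤ gl n i'.val + ol n (gl n i'.val) + 1) (by omega)
          omega
        · -- top/bottom
          have hc1 := hcyc i'
          have hi := i'.isLt
          have b1 := tile_le (a := h) (w := n) (J := k - c) h2
            (by split_ifs at hc1 <;> omega : h+1 ≤ gl n i'.val + gl n ((i'.val+1)%n))
            (by split_ifs at hc1 <;> omega)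
          obtain ⟨_, hgne, _, hb⟩ := htop i j h1
          have o1 := ol_add ho hn (hgl i).1 (hgl i).2 (by simpa [hh] using hgne)
          have b2 := tile_le (a := h) (w := n-1) (J := c) hb
            (by omega : h+1 ≤ gl n i.val + ol n (gl n i.val) + 1) (by omega)
          omega
        · -- top/top
          obtain ⟨hi1, hgne, hjk, hb⟩ := htop i j h1
          obtain ⟨hi1', hgne', hjk', hb'⟩ := htop i' j' h2
          have o1 := ol_add ho hn (hgl i).1 (hgl i).2 (by simpa [hh] using hgne)
          have o1' := ol_add ho hn (hgl i').1 (hgl i').2 (by simpa [hh] using hgne')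
          obtain ⟨hu, hj⟩ := tile_inj' (a := h) (w := n-1)
            (by omega : h+1 ≤ gl n i.val + (ol n (gl n i.val) + 1)) (by omega)
            (by omega : h+1 ≤ gl n i'.val + (ol n (gl n i'.val) + 1)) (by omega)
            (by omega : gl n i.val + (ol n (gl n i.val) + 1) + (j.val - (k-c))*(n-1)
              = gl n i'.val + (ol n (gl n i'.val) + 1) + (j'.val - (k-c))*(n-1))
          have hgg : gl n i.val = gl n i'.val := ol_add_inj ho hn (hgl i).1 (hgl i).2
            (by simpa [hh] using hgne) (hgl i').1 (hgl i').2 (by simpa [hh] using hgne')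
            (by omega)
          have hii : i = i' := Fin.ext (gl_inj ho i.isLt i'.isLt hgg)
          subst hii
          exact congrArg _ (congrArg _ (Fin.ext (by omega)))
  have hesbij : Set.BijOn (esum n k c) (Set.range (ee (Kf n k c) hn0))
      (Set.Icc (h+1) (h+M)) := by
    refine bijOn_count ?_ ?_ (Set.finite_Icc _ _) ?_
    · rintro e ⟨x, rfl⟩
      rw [Set.mem_Icc]
      cases x with
      | inl i =>
        rw [hesum_inl, hcyc]
        have := i.isLt
        split_ifs with hie <;> omega
      | inr z =>
        obtain ⟨i, j⟩ := z
        rw [hesum_inr]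
        simp only [vl]
        have hc1 := hcyc i
        have hi := i.isLt
        split_ifs with hj
        · have b1 := tile_le (a := h) (w := n) (J := k - c) hj
            (by split_ifs at hc1 <;> omega : h+1 ≤ gl n i.val + gl n ((i.val+1)%n))
            (by split_ifs at hc1 <;> omega)
          omega
        · obtain ⟨_, hgne, _, hb⟩ := htop i j hj
          have o1 := ol_add ho hn (hgl i).1 (hgl i).2 (by simpa [hh] using hgne)
          have b1 := tile_le (a := h) (w := n-1) (J := c) hb
            (by omega : h+1 ≤ gl n i.val + ol n (gl n i.val) + 1) (by omega)
          omega
    · rintro e ⟨x, rfl⟩ e' ⟨y, rfl⟩ hee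
      exact congrArg _ (hψinj x y hee)
    · rw [ncard_edge n _ hn hn0, hcard, ncard_Icc]; omega
  -- assemble
  refine ⟨?_, ?_, ?_⟩
  · rw [hcard]; exact hvlbij
  · rw [hcard, hnc, hE]
    refine ⟨?_, ?_, ?_⟩
    · intro e he
      have h1 := hesbij.mapsTo he
      rw [Set.mem_Icc] at h1 ⊢
      show M + 1 ≤ C - esum n k c e ∧ C - esum n k c e ≤ M + M
      omega
    · intro e he e' he' heq
      have heq' : C - esum n k c e = C - esum n k c e' := heq
      have b1 := hesbij.mapsTo he
      have b2 := hesbij.mapsTo he'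
      rw [Set.mem_Icc] at b1 b2
      exact hesbij.injOn he he' (by omega)
    · intro y hy
      rw [Set.mem_Icc] at hy
      obtain ⟨e, he, hee⟩ := hesbij.surjOn (Set.mem_Icc.2 (by omega : h+1 ≤ C - y ∧ C - y ≤ h+M))
      exact ⟨e, he, (by omega : C - esum n k c e = y)⟩
  · intro u v hadj
    have hmem : s(u, v) ∈ (pendantCycle n (Kf n k c)).edgeSet := hadj
    rw [hE] at hmem
    have h1 := hesbij.mapsTo hmem
    rw [Set.mem_Icc] at h1
    have h2 : esum n k c s(u, v) = vl n k c u + vl n k c v := rfl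
    show vl n k c u + vl n k c v + (C - esum n k c s(u, v)) = C
    omega

end Construction

/-! ### lower bound -/

lemma gauss1 (N : ℕ) : 2 * ∑ i ∈ Finset.Icc 1 N, i = N*(N+1) := by
  induction N with
  | zero => simp
  | succ N ih =>
    rw [Finset.sum_Icc_succ_top (by omega : 1 ≤ N + 1)]
    have : (N+1)*(N+1+1) = N*(N+1) + 2*(N+1) := by ring
    omega

lemma gauss2 (M : ℕ) : 2 * ∑ i ∈ Finset.Icc (M+1) (M+M), i = M*(3*M+1) := by
  have hsplit := Finset.sum_Ioc_consecutive id (by omega : 0 ≤ M) (by omega : M ≤ M+M)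
  rw [← Finset.Icc_add_one_left_eq_Ioc 0 M, ← Finset.Icc_add_one_left_eq_Ioc M (M+M), ← Finset.Icc_add_one_left_eq_Ioc 0 (M+M)] at hsplit
  have g1 := gauss1 M
  have g2 := gauss1 (M+M)
  have e : (M+M)*((M+M)+1) = M*(M+1) + M*(3*M+1) := by ring
  simp only [Nat.succ_eq_add_one, zero_add, id] at hsplit
  omega

lemma sum_distinct_aux (N : ℕ) :
    ∀ (s : Finset ℕ), s.card = N → 0 ∉ s → N * (N + 1) ≤ 2 * ∑ x ∈ s, x := by
  induction N with
  | zero => intro s _ _; simp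
  | succ N ih =>
    intro s hN h0
    have hne : s.Nonempty := by rw [← Finset.card_pos, hN]; omega
    set Mx := s.max' hne with hMx
    have hMs : Mx ∈ s := s.max'_mem hne
    have hsub : s ⊆ Finset.Icc 1 Mx := by
      intro x hx
      rw [Finset.mem_Icc]
      exact ⟨by have : x ≠ 0 := fun hxx => h0 (hxx ▸ hx); omega, s.le_max' x hx⟩
    have hcard : N + 1 ≤ Mx := by
      have := Finset.card_le_card hsub
      rwa [hN, Nat.card_Icc, Nat.add_sub_cancel] at this
    have hec : (s.erase Mx).card = N := by rw [Finset.card_erase_of_mem hMs, hN]; rfl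
    have h0' : 0 ∉ s.erase Mx := fun hx => h0 (Finset.mem_of_mem_erase hx)
    have hih := ih (s.erase Mx) hec h0'
    have hsum : (∑ x ∈ s.erase Mx, x) + Mx = ∑ x ∈ s, x := Finset.sum_erase_add s _ hMs
    have : (N+1)*(N+1+1) = N*(N+1) + 2*(N+1) := by ring
    omega

lemma sum_distinct (s : Finset ℕ) (h0 : 0 ∉ s) : s.card * (s.card + 1) ≤ 2 * ∑ x ∈ s, x :=
  sum_distinct_aux s.card s rfl h0


lemma final_arith {n k c M X XE y cf T1 T2 : ℕ} (hn : 3 ≤ n) (ho : Odd n) (hc : 1 ≤ c)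
    (hck : c ≤ k) (hM : M = n + (k-c)*n + c*(n-1)) (hXEy : XE + y = X)
    (hX : n*(n+1) ≤ 2*X) (hXE : (n-1)*n ≤ 2*XE)
    (g1 : 2*T1 = M*(M+1)) (g2 : 2*T2 = M*(3*M+1))
    (e0 : M*cf + c*y + X = 2*X + T1 + k*X + T2) :
    2*M + (n+1)/2 + 1 ≤ cf := by
  obtain ⟨d, rfl⟩ : ∃ d, k = c + d := ⟨k - c, by omega⟩
  obtain ⟨t, rfl⟩ : ∃ t, n = 2*t+1 := by obtain ⟨t, ht⟩ := ho; exact ⟨t, by omega⟩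
  have hkc : c + d - c = d := by omega
  rw [hkc] at hM
  rw [Nat.add_sub_cancel] at hM hXE
  have hdiv : (2*t+1+1)/2 = t+1 := by omega
  rw [hdiv]
  by_contra hlt
  push_neg at hlt
  have ht1 : 1 ≤ t := by omega
  have hcf : cf ≤ 2*M + t + 1 := by omega
  have b1 : M * cf ≤ M * (2*M + t + 1) := Nat.mul_le_mul_left M hcf
  have b2 := Nat.mul_le_mul_left (d+1) hX
  have b3 := Nat.mul_le_mul_left c hXE
  nlinarith [b1, b2, b3, e0, g1, g2, hXEy, hM, hc, ht1]

lemma adj_cyc {n : ℕ} {K : Fin n → ℕ} (hn : 3 ≤ n) (hn0 : 0 < n) (i : Fin n) :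
    (pendantCycle n K).Adj (.inl i) (.inl (nxt hn0 i)) := by
  refine ⟨by simpa [Ne, eq_comm] using nxt_ne hn hn0 i, Or.inl (Or.inl ?_)⟩
  exact ⟨i, nxt hn0 i, rfl, rfl, rfl⟩

lemma adj_pend {n : ℕ} {K : Fin n → ℕ} (z : Σ i : Fin n, Fin (K i)) :
    (pendantCycle n K).Adj (.inr z) (.inl z.1) := by
  refine ⟨by simp, Or.inl (Or.inr ?_)⟩
  exact ⟨z.1, z.2, by simp, rfl⟩

lemma lower_bound {n k c : ℕ} (hn : 3 ≤ n) (ho : Odd n) (hc : 1 ≤ c) (hck : c ≤ k)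
    {fv : V n (Kf n k c) → ℕ} {fe : Sym2 (V n (Kf n k c)) → ℕ} {cf : ℕ}
    (hs : IsSEMT (pendantCycle n (Kf n k c)) fv fe cf) :
    2*(n + (k-c)*n + c*(n-1)) + (n+1)/2 + 1 ≤ cf := by
  have hn0 : 0 < n := by omega
  set M := n + (k-c)*n + c*(n-1) with hM
  have hE : (pendantCycle n (Kf n k c)).edgeSet = Set.range (ee (Kf n k c) hn0) :=
    edgeSet_eq hn hn0
  have hcard : Fintype.card (V n (Kf n k c)) = M := cardV n k c hn hck
  have hnc : (pendantCycle n (Kf n k c)).edgeSet.ncard = M := by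
    rw [hE, ncard_edge n _ hn hn0, hcard]
  obtain ⟨hfv, hfe, hmag⟩ := hs
  rw [hcard] at hfv
  rw [hcard, hnc, hE] at hfe
  haveI : NeZero n := ⟨by omega⟩
  set last : Fin n := ⟨n-1, by omega⟩ with hlast
  set X := ∑ i : Fin n, fv (.inl i) with hX
  set y := fv (.inl last) with hy
  set XE := ∑ i ∈ Finset.univ.erase last, fv (.inl i) with hXE
  set P := ∑ z : (Σ i : Fin n, Fin (Kf n k c i)), fv (.inr z) with hP
  set Q := ∑ i : Fin n, (Kf n k c i) * fv (.inl i) with hQdef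
  set T1 := ∑ i ∈ Finset.Icc 1 M, i with hT1def
  set T2 := ∑ i ∈ Finset.Icc (M+1) (M+M), i with hT2def
  have hfvinj : ∀ a b, fv a = fv b → a = b :=
    fun a b hab => hfv.injOn (Set.mem_univ a) (Set.mem_univ b) hab
  have hfv1 : ∀ a, 1 ≤ fv a ∧ fv a ≤ M := by
    intro a
    have := hfv.mapsTo (Set.mem_univ a)
    rwa [Set.mem_Icc] at this
  -- total vertex sum
  have hT1 : ∑ x : V n (Kf n k c), fv x = T1 := by
    refine Finset.sum_bij (fun a _ => fv a) ?_ ?_ ?_ (fun a ha => rfl)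
    · intro a _
      rw [Finset.mem_Icc]
      exact hfv1 a
    · intro a _ b _ hab
      exact hfvinj a b hab
    · intro b hb
      rw [Finset.mem_Icc] at hb
      obtain ⟨a, -, ha⟩ := hfv.surjOn (Set.mem_Icc.2 hb)
      exact ⟨a, Finset.mem_univ a, ha⟩
  -- total edge-label sum
  have hT2 : ∑ x : V n (Kf n k c), fe (ee (Kf n k c) hn0 x) = T2 := by
    refine Finset.sum_bij (fun a _ => fe (ee (Kf n k c) hn0 a)) ?_ ?_ ?_ (fun a ha => rfl)
    · intro a _
      rw [Finset.mem_Icc]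
      have := hfe.mapsTo (Set.mem_range_self a)
      rwa [Set.mem_Icc] at this
    · intro a _ b _ hab
      exact ee_inj hn hn0 (hfe.injOn (Set.mem_range_self a) (Set.mem_range_self b) hab)
    · intro b hb
      rw [Finset.mem_Icc] at hb
      obtain ⟨e, he, hee⟩ := hfe.surjOn (Set.mem_Icc.2 hb)
      obtain ⟨a, rfl⟩ := he
      exact ⟨a, Finset.mem_univ a, hee⟩
  -- the magic identity summed over all edges
  have hmagic : ∀ x : V n (Kf n k c),
      Sum.elim (fun i => fv (.inl i) + fv (.inl (nxt hn0 i)))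
        (fun z => fv (.inr z) + fv (.inl z.1)) x + fe (ee (Kf n k c) hn0 x) = cf := by
    intro x
    cases x with
    | inl i => exact hmag _ _ (adj_cyc hn hn0 i)
    | inr z => exact hmag _ _ (adj_pend z)
  have A0 : ∑ x : V n (Kf n k c),
      (Sum.elim (fun i => fv (.inl i) + fv (.inl (nxt hn0 i)))
        (fun z => fv (.inr z) + fv (.inl z.1)) x + fe (ee (Kf n k c) hn0 x)) = M * cf := by
    rw [Finset.sum_congr rfl (fun x _ => hmagic x), Finset.sum_const, Finset.card_univ,
      hcard, smul_eq_mul]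
  rw [Finset.sum_add_distrib, hT2, Fintype.sum_sum_type] at A0
  simp only [Sum.elim_inl, Sum.elim_inr] at A0
  rw [Finset.sum_add_distrib, Finset.sum_add_distrib] at A0
  -- shift sum
  have hshift : ∑ i : Fin n, fv (.inl (nxt hn0 i)) = X := by
    have hnxt : ∀ i : Fin n, nxt hn0 i = i + 1 := by
      intro i
      apply Fin.ext
      rw [Fin.add_def, Fin.val_one', Nat.mod_eq_of_lt (show 1 < n by omega)]
      rfl
    rw [Finset.sum_congr rfl (fun i _ => by rw [hnxt i])]
    exact Fintype.sum_equiv (Equiv.addRight (1 : Fin n)) _ _ (fun i => rfl)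
  -- sigma sum
  have hsig : ∑ z : (Σ i : Fin n, Fin (Kf n k c i)), fv (.inl z.1) = Q := by
    rw [← Finset.univ_sigma_univ, Finset.sum_sigma]
    refine Finset.sum_congr rfl (fun i _ => ?_)
    have hcon : ∀ j : Fin (Kf n k c i), fv (Sum.inl ((⟨i, j⟩ : Σ a : Fin n, Fin (Kf n k c a)).fst)) = fv (Sum.inl i) :=
      fun _ => rfl
    rw [Finset.sum_congr rfl (fun j _ => hcon j), Finset.sum_const, Finset.card_univ,
      Fintype.card_fin, smul_eq_mul]
  rw [hshift, hsig] at A0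
  -- Q + c*y = k*X
  have hQ : Q + c * y = k * X := by
    have hpt : ∀ i : Fin n, Kf n k c i * fv (.inl i) +
        (if i = last then c * fv (.inl i) else 0) = k * fv (.inl i) := by
      intro i
      by_cases hie : i = last
      · subst hie
        rw [if_pos rfl]
        have hKl : Kf n k c last = k - c := by
          show (if (last : Fin n).val = n - 1 then k - c else k) = k - c
          rw [if_pos rfl]
        rw [hKl, ← Nat.add_mul, Nat.sub_add_cancel hck]
      · rw [if_neg hie, add_zero]
        have hKl : Kf n k c i = k := by
          show (if i.val = n - 1 then k - c else k) = k
          rw [if_neg]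
          intro hval
          exact hie (Fin.ext (by rw [hval]))
        rw [hKl]
    have h1 : ∑ i : Fin n, (Kf n k c i * fv (.inl i) +
        (if i = last then c * fv (.inl i) else 0)) = ∑ i : Fin n, k * fv (.inl i) :=
      Finset.sum_congr rfl (fun i _ => hpt i)
    rw [Finset.sum_add_distrib, Finset.sum_ite_eq' Finset.univ last
      (fun i => c * fv (.inl i)), if_pos (Finset.mem_univ last), ← Finset.mul_sum] at h1
    exact h1
  -- X + P = T1
  have hXP : X + P = T1 := by
    rw [← hT1, Fintype.sum_sum_type]
  -- distinct label sums
  have himg : ∀ (s : Finset (Fin n)), (s.card) * (s.card + 1) ≤ 2 * ∑ i ∈ s, fv (.inl i) := by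
    intro s
    have hinj : ∀ x ∈ s, ∀ y ∈ s, fv (.inl x) = fv (.inl y) → x = y := by
      intro a _ b _ hab
      have := hfvinj _ _ hab
      exact Sum.inl.inj this
    have h0 : 0 ∉ s.image (fun i => fv (.inl i)) := by
      intro h0'
      obtain ⟨i, -, hi⟩ := Finset.mem_image.1 h0'
      have := (hfv1 (.inl i)).1
      omega
    have := sum_distinct (s.image (fun i => fv (.inl i))) h0
    rwa [Finset.card_image_of_injOn hinj, Finset.sum_image hinj] at this
  have hXbd : n*(n+1) ≤ 2*X := by
    have := himg Finset.univ
    rwa [Finset.card_univ, Fintype.card_fin] at this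
  have hXEbd : (n-1)*n ≤ 2*XE := by
    have := himg (Finset.univ.erase last)
    rw [Finset.card_erase_of_mem (Finset.mem_univ last), Finset.card_univ,
      Fintype.card_fin] at this
    have hn1 : n - 1 + 1 = n := by omega
    rwa [hn1] at this
  have hXEy : XE + y = X :=
    Finset.sum_erase_add Finset.univ (fun i => fv (.inl i)) (Finset.mem_univ last)
  exact final_arith hn ho hc hck hM hXEy hXbd hXEbd (gauss1 M) (gauss2 M) (by omega)

end SM10

/-- `G_{n,k,-c}`: odd cycle `a₁,…,aₙ` with `k` pendants at `a₁,…,a_{n-1}` and `k−c` pendants at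
`aₙ`, where `1 ≤ c ≤ k`. It is super edge-magic total with strength `2n(k+1) − 2c + (n+3)/2`. -/
theorem stmt_10 (n k c : ℕ) (hn : 3 ≤ n) (ho : Odd n) (hk : 1 ≤ k) (hc : 1 ≤ c) (hck : c ≤ k) :
    (∃ fv fe cf,
        IsSEMT (pendantCycle n (fun i => if i.val = n - 1 then k - c else k)) fv fe cf) ∧
    sInf {cf | ∃ fv fe,
        IsSEMT (pendantCycle n (fun i => if i.val = n - 1 then k - c else k)) fv fe cf} =
      2 * n * (k + 1) - 2 * c + (n + 3) / 2 := by
  have hcon := SM10.construction (n := n) (k := k) (c := c) hn ho hc hck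
  set M := n + (k-c)*n + c*(n-1) with hM
  have hMc2 : 2*M + 2*c = 2*n*(k+1) := by
    obtain ⟨d, rfl⟩ : ∃ d, k = c + d := ⟨k - c, by omega⟩
    have h1 : c + d - c = d := by omega
    rw [hM, h1]
    have h2 : c*(n-1) + c = c*n := by
      conv_rhs => rw [show n = n-1+1 by omega]
      rw [Nat.mul_succ]
    have h3 : 2*n*(c+d+1) = 2*(n + d*n + c*n) := by ring
    omega
  have hhalf : (n+3)/2 = (n+1)/2 + 1 := by
    obtain ⟨t, rfl⟩ := ho; omega
  constructor
  · exact ⟨_, _, _, hcon⟩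
  · have hmem : (2*M + (n+1)/2 + 1) ∈ {cf | ∃ fv fe,
        IsSEMT (pendantCycle n (fun i => if i.val = n - 1 then k - c else k)) fv fe cf} :=
      ⟨_, _, hcon⟩
    have hlb : ∀ b ∈ {cf | ∃ fv fe,
        IsSEMT (pendantCycle n (fun i => if i.val = n - 1 then k - c else k)) fv fe cf},
        2*M + (n+1)/2 + 1 ≤ b := by
      rintro b ⟨fv, fe, hb⟩
      exact SM10.lower_bound hn ho hc hck hb
    have heq : sInf {cf | ∃ fv fe,
        IsSEMT (pendantCycle n (fun i => if i.val = n - 1 then k - c else k)) fv fe cf} =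
        2*M + (n+1)/2 + 1 :=
      le_antisymm (Nat.sInf_le hmem) (le_csInf ⟨_, hmem⟩ hlb)
    rw [heq]
    omega
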